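/- Let C be a building of type (W,S), B a fixed chamber, π the B-based folding map, and c a chamber. Suppose γ is a minimal gallery in W from 1 to some w, and that π(c) admits a reduced expression extending γ (i.e., some minimal gallery from 1 to π(c) in W begins with γ). Then there exists a minimal gallery from B to c in C whose π-projection begins with γ. -/

import Mathlib

/-- A building of type `(W, S)` (Abramenko–Brown `W`-metric definition): a set of chambers
`C` with a `W`-valued distance `δC` satisfying the standard building axioms (WD1)–(WD3). -/
structure IsBuilding {B W C : Type*} [Group W] {M : CoxeterMatrix B}
    (cs : CoxeterSystem M W) (δC : C → C → W) : Prop where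
  eq_one_iff : ∀ c d : C, δC c d = 1 ↔ c = d
  wd2 : ∀ (c d d' : C) (i : B), δC d d' = cs.simple i →
    δC c d' = δC c d * cs.simple i ∨ δC c d' = δC c d
  wd2' : ∀ (c d d' : C) (i : B), δC d d' = cs.simple i →
    cs.length (δC c d * cs.simple i) = cs.length (δC c d) + 1 →
    δC c d' = δC c d * cs.simple i
  wd3 : ∀ (c d : C) (i : B), ∃ d' : C, δC d d' = cs.simple i ∧
    δC c d' = δC c d * cs.simple i

/-- A gallery in the building: a sequence of consecutively adjacent chambers. -/
def IsGallery {B W C : Type*} [Group W] {M : CoxeterMatrix B}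
    (cs : CoxeterSystem M W) (δC : C → C → W) (l : List C) : Prop :=
  l.Chain' (fun c d => ∃ i : B, δC c d = cs.simple i)

/-- A minimal gallery from `x` to `y`: a gallery starting at `x`, ending at `y`,
whose length (number of steps) equals `ℓ(δC x y)`. -/
def IsMinGallery {B W C : Type*} [Group W] {M : CoxeterMatrix B}
    (cs : CoxeterSystem M W) (δC : C → C → W) (x y : C) (l : List C) : Prop :=
  IsGallery cs δC l ∧ l.head? = some x ∧ l.getLast? = some y ∧
    l.length = cs.length (δC x y) + 1

/-- A gallery in the Coxeter complex `W`: consecutive elements differ by a simple reflection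
on the right. -/
def IsWGallery {B W : Type*} [Group W] {M : CoxeterMatrix B}
    (cs : CoxeterSystem M W) (l : List W) : Prop :=
  l.Chain' (fun u v => ∃ i : B, v = u * cs.simple i)

/-- A minimal gallery from `u` to `w` in the Coxeter complex `W`. -/
def IsMinWGallery {B W : Type*} [Group W] {M : CoxeterMatrix B}
    (cs : CoxeterSystem M W) (u w : W) (l : List W) : Prop :=
  IsWGallery cs l ∧ l.head? = some u ∧ l.getLast? = some w ∧
    l.length = cs.length (u⁻¹ * w) + 1

private lemma simple_ne_one' {B W : Type*} [Group W] {M : CoxeterMatrix B}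
    (cs : CoxeterSystem M W) (i : B) : cs.simple i ≠ 1 := by
  intro h
  have := cs.length_simple i
  rw [h, cs.length_one] at this
  exact one_ne_zero this.symm

private lemma adj_symm {B W C : Type*} [Group W] {M : CoxeterMatrix B}
    {cs : CoxeterSystem M W} {δC : C → C → W} (hb : IsBuilding cs δC)
    {d d' : C} {i : B} (h : δC d d' = cs.simple i) : δC d' d = cs.simple i := by
  rcases hb.wd2 d' d d' i h with h2 | h2
  · have h1 : δC d' d' = 1 := (hb.eq_one_iff d' d').mpr rfl
    rw [h1] at h2
    have : δC d' d = (cs.simple i)⁻¹ := eq_inv_of_mul_eq_one_left h2.symm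
    rw [this, cs.inv_simple]
  · have h1 : δC d' d' = 1 := (hb.eq_one_iff d' d').mpr rfl
    rw [h1] at h2
    have : d = d' := ((hb.eq_one_iff d' d).mp h2.symm).symm
    rw [this, h1] at h ⊢
    exact h

/-- Backward lifting: any `W`-gallery ending at `δC Bc d` lifts to a gallery in the
building ending at `d` whose projection is the given gallery. We phrase it on the
reversed list. -/
private lemma lift_rev {B W C : Type*} [Group W] {M : CoxeterMatrix B}
    {cs : CoxeterSystem M W} {δC : C → C → W} (hb : IsBuilding cs δC) (Bc : C) :
    ∀ (ρ : List W) (d : C),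
      ρ.Chain' (fun u v => ∃ i : B, u = v * cs.simple i) →
      ρ.head? = some (δC Bc d) →
      ∃ G : List C, G.map (δC Bc) = ρ.reverse ∧ IsGallery cs δC G ∧
        G.getLast? = some d := by
  intro ρ
  induction ρ with
  | nil => intro d _ h; simp at h
  | cons x t ih =>
      intro d hchain hhead
      simp at hhead
      match t, hchain with
      | [], _ => exact ⟨[d], by simp [hhead], List.isChain_singleton d, rfl⟩
      | y :: t', hchain =>
          obtain ⟨⟨i, hi⟩, hchain'⟩ := List.isChain_cons_cons.mp hchain
          obtain ⟨d', hd'1, hd'2⟩ := hb.wd3 Bc d i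
          have hy : δC Bc d' = y := by
            rw [hd'2, ← hhead, hi, mul_assoc, cs.simple_mul_simple_self, mul_one]
          obtain ⟨G', hmap, hgal, hlast⟩ := ih d' hchain' (by simp [hy])
          refine ⟨G' ++ [d], ?_, ?_, ?_⟩
          · simp [hmap, hhead]
          · refine List.isChain_append.mpr ⟨hgal, List.isChain_singleton d, ?_⟩
            intro a ha b hbmem
            simp at hbmem
            subst hbmem
            rw [hlast] at ha
            simp at ha
            subst ha
            exact ⟨i, adj_symm hb hd'1⟩
          · simp

/-- If some minimal gallery in `W` from `1` to the image of `c` under the folding map begins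
with the minimal gallery `γ`, then there is a minimal gallery from `Bc` to `c` in the
building whose projection begins with `γ`. -/
theorem exists_minimal_gallery_extending {B W C : Type*} [Group W] {M : CoxeterMatrix B}
    (cs : CoxeterSystem M W) (δC : C → C → W) (hb : IsBuilding cs δC) (Bc c : C)
    (w : W) (γ : List W) (hγ : IsMinWGallery cs 1 w γ)
    (hext : ∃ η : List W, IsMinWGallery cs 1 (δC Bc c) η ∧ γ <+: η) :
    ∃ G : List C, IsMinGallery cs δC Bc c G ∧ γ <+: (G.map (δC Bc)) := by
  obtain ⟨η, ⟨hηg, hηh, hηl, hηlen⟩, hpre⟩ := hext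
  obtain ⟨G, hmap, hgal, hlast⟩ := lift_rev hb Bc η.reverse c
    (by
      refine List.isChain_reverse.mpr ?_
      exact List.IsChain.imp (fun u v ⟨i, hi⟩ => ⟨i, hi⟩) hηg)
    (by rw [List.head?_reverse, hηl])
  rw [List.reverse_reverse] at hmap
  have hGne : G ≠ [] := by
    intro h; rw [h] at hlast; simp at hlast
  have hhead : G.head? = some Bc := by
    have h1 : (G.map (δC Bc)).head? = some 1 := by rw [hmap, hηh]
    rw [List.head?_map] at h1
    cases hG : G.head? with
    | none => rw [hG] at h1; simp at h1
    | some a =>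
        rw [hG] at h1
        simp at h1
        have : a = Bc := ((hb.eq_one_iff Bc a).mp h1).symm
        rw [this]
  refine ⟨G, ⟨hgal, hhead, hlast, ?_⟩, ?_⟩
  · have : G.length = η.length := by
      rw [← hmap, List.length_map]
    rw [this, hηlen]
    simp
  · rw [hmap]; exact hpre
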